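/- Let 𝔽 be an infinite field. Let L_{ε,φ}(λ) be a dual basis for a family φ = (φ_0,…,φ_ε) and L_{η,ψ}(λ) a dual basis for a family ψ = (ψ_0,…,ψ_η), and assume π_{ε,φ}(λ₀) ≠ 0 and π_{η,ψ}(λ₀) ≠ 0 for every λ₀ ∈ 𝔽. Let A ∈ 𝔽^{k₁×(ε+1)} and B ∈ 𝔽^{k₂×(η+1)} have full row rank, and define M(λ) := [[A ⊗ L_{η,ψ}(λ)],[L_{ε,φ}(λ) ⊗ B]]. If the polynomial vector A·π_{ε,φ}(λ) is not identically zero, or the polynomial vector B·π_{η,ψ}(λ) is not identically zero, then there exists λ₀ ∈ 𝔽 such that the right kernel of M(λ₀) has dimension at least 1 + (ε+1−k₁)(η+1−k₂). -/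

import Mathlib

open Polynomial Matrix

namespace PaperLin

variable {F : Type*} [Field F]

/-- The `k × (k+1)` matrix pencil `L` is a (full row-rank, linear) dual basis
for the polynomial vector `π`: its entries have degree at most 1,
`L(λ)·π(λ) = 0` identically, and `L(λ₀)` has rank `k` for every `λ₀ ∈ F`. -/
def IsDualBasis {k : ℕ} (L : Matrix (Fin k) (Fin (k + 1)) (Polynomial F))
    (π : Fin (k + 1) → Polynomial F) : Prop :=
  (∀ i j, (L i j).degree ≤ 1) ∧
  L.mulVec π = 0 ∧
  ∀ x : F, (L.map (Polynomial.eval x)).rank = k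

/-- Kronecker product of two vectors, as a function on the product index. -/
def kron {m n : Type*} (u : m → F) (v : n → F) : m × n → F := fun p => u p.1 * v p.2

lemma kron_ne_zero {m n : Type*} {u : m → F} {v : n → F} (hu : u ≠ 0) (hv : v ≠ 0) :
    kron u v ≠ 0 := by
  obtain ⟨a, ha⟩ := Function.ne_iff.1 hu
  obtain ⟨b, hb⟩ := Function.ne_iff.1 hv
  exact Function.ne_iff.2 ⟨(a, b), mul_ne_zero ha hb⟩

lemma kron_zero_left {m n : Type*} (v : n → F) : kron (0 : m → F) v = 0 := by
  funext p; simp [kron]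

lemma kron_zero_right {m n : Type*} (u : m → F) : kron u (0 : n → F) = 0 := by
  funext p; simp [kron]

/-- Kronecker products of two linearly independent families are linearly independent. -/
lemma kron_indep {E H : Type*} {d₁ d₂ : ℕ} {u : Fin d₁ → (E → F)} {v : Fin d₂ → (H → F)}
    (hu : LinearIndependent F u) (hv : LinearIndependent F v) :
    LinearIndependent F (fun ij : Fin d₁ × Fin d₂ => kron (u ij.1) (v ij.2)) := by
  rw [Fintype.linearIndependent_iff]
  intro c hc ij
  have hc' : ∀ (a : E) (b : H), ∑ i, ∑ j, c (i, j) * (u i a * v j b) = 0 := by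
    intro a b
    have h := congrFun hc (a, b)
    simpa [Fintype.sum_prod_type, kron] using h
  have h1 : ∀ (i : Fin d₁) (b : H), ∑ j, c (i, j) * v j b = 0 := by
    intro i b
    refine (Fintype.linearIndependent_iff.1 hu) (fun i => ∑ j, c (i, j) * v j b) ?_ i
    funext a
    simp only [Finset.sum_apply, Pi.smul_apply, smul_eq_mul, Pi.zero_apply]
    calc ∑ i, (∑ j, c (i, j) * v j b) * u i a
        = ∑ i, ∑ j, c (i, j) * (u i a * v j b) := by
          refine Finset.sum_congr rfl fun i _ => ?_
          rw [Finset.sum_mul]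
          exact Finset.sum_congr rfl fun j _ => by ring
      _ = 0 := hc' a b
  refine (Fintype.linearIndependent_iff.1 hv) (fun j => c (ij.1, j)) ?_ ij.2
  funext b
  simpa using h1 ij.1 b

/-- If a linear map kills all the `kron (u i) (v j)` but not `w`, then the family
consisting of `w` together with the `kron (u i) (v j)` is linearly independent. -/
lemma indep_aux {E H W : Type*} [AddCommGroup W] [Module F W]
    {d₁ d₂ : ℕ} {u : Fin d₁ → (E → F)} {v : Fin d₂ → (H → F)}
    (hu : LinearIndependent F u) (hv : LinearIndependent F v)
    {w : E × H → F} (Φ : ((E × H) → F) →ₗ[F] W)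
    (hw : Φ w ≠ 0) (h0 : ∀ i j, Φ (kron (u i) (v j)) = 0) :
    LinearIndependent F (fun o : Option (Fin d₁ × Fin d₂) =>
      o.elim w (fun ij => kron (u ij.1) (v ij.2))) := by
  rw [Fintype.linearIndependent_iff]
  intro c hc
  rw [Fintype.sum_option] at hc
  simp only [Option.elim_none, Option.elim_some] at hc
  have hnone : c none = 0 := by
    have h := congrArg Φ hc
    rw [map_add, map_zero, _root_.map_smul, map_sum] at h
    rw [Finset.sum_eq_zero (fun ij _ => by
      rw [_root_.map_smul, h0 ij.1 ij.2, smul_zero]), add_zero] at h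
    rcases smul_eq_zero.1 h with h | h
    · exact h
    · exact absurd h hw
  have hrest : ∀ ij, c (some ij) = 0 := by
    have hsum : ∑ ij : Fin d₁ × Fin d₂, c (some ij) • kron (u ij.1) (v ij.2) = 0 := by
      rw [hnone, zero_smul, zero_add] at hc
      exact hc
    have hki : LinearIndependent F (fun ij : Fin d₁ × Fin d₂ => kron (u ij.1) (v ij.2)) :=
      kron_indep hu hv
    rw [Fintype.linearIndependent_iff] at hki
    exact fun ij => hki (fun ij => c (some ij)) hsum ij
  intro o
  cases o with
  | none => exact hnone
  | some ij => exact hrest ij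

/-- Left multiplication by a matrix on the first factor, as a linear map. -/
def leftMulLin {k m : ℕ} (A : Matrix (Fin k) (Fin m) F) (H : Type*) [Fintype H] :
    ((Fin m × H) → F) →ₗ[F] ((Fin k × H) → F) where
  toFun X := fun p => ∑ a, A p.1 a * X (a, p.2)
  map_add' X Y := by
    funext p; simp [mul_add, Finset.sum_add_distrib]
  map_smul' c X := by
    funext p
    simp only [Pi.smul_apply, smul_eq_mul, RingHom.id_apply, Finset.mul_sum]
    exact Finset.sum_congr rfl fun a _ => by ring

lemma leftMulLin_kron {k m : ℕ} (A : Matrix (Fin k) (Fin m) F) (H : Type*) [Fintype H]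
    (u : Fin m → F) (v : H → F) :
    leftMulLin A H (kron u v) = kron (A.mulVec u) v := by
  funext p
  simp only [leftMulLin, LinearMap.coe_mk, AddHom.coe_mk, kron, Matrix.mulVec,
    dotProduct, Finset.sum_mul]
  exact Finset.sum_congr rfl fun a _ => by ring

/-- Right multiplication by a matrix on the second factor, as a linear map. -/
def rightMulLin {k n : ℕ} (B : Matrix (Fin k) (Fin n) F) (E : Type*) [Fintype E] :
    ((E × Fin n) → F) →ₗ[F] ((E × Fin k) → F) where
  toFun X := fun p => ∑ b, B p.2 b * X (p.1, b)
  map_add' X Y := by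
    funext p; simp [mul_add, Finset.sum_add_distrib]
  map_smul' c X := by
    funext p
    simp only [Pi.smul_apply, smul_eq_mul, RingHom.id_apply, Finset.mul_sum]
    exact Finset.sum_congr rfl fun a _ => by ring

lemma rightMulLin_kron {k n : ℕ} (B : Matrix (Fin k) (Fin n) F) (E : Type*) [Fintype E]
    (u : E → F) (v : Fin n → F) :
    rightMulLin B E (kron u v) = kron u (B.mulVec v) := by
  funext p
  simp only [rightMulLin, LinearMap.coe_mk, AddHom.coe_mk, kron, Matrix.mulVec,
    dotProduct, Finset.mul_sum]
  exact Finset.sum_congr rfl fun a _ => by ring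

/-- Rank-nullity for matrices. -/
lemma finrank_ker_mulVecLin {k m : ℕ} (A : Matrix (Fin k) (Fin m) F) (hA : A.rank = k) :
    Module.finrank F (LinearMap.ker A.mulVecLin) = m - k ∧ k ≤ m := by
  have h := LinearMap.finrank_range_add_finrank_ker A.mulVecLin
  rw [Module.finrank_pi] at h
  have hr : A.rank = Module.finrank F (LinearMap.range A.mulVecLin) := rfl
  rw [← hr, hA, Fintype.card_fin] at h
  omega

/-- If `A` or `B` in the generalized product construction is not of full block
size, the pencil `M(λ) = [[A ⊗ L_ψ],[L_φ ⊗ B]]` drops rank at some point: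
its right kernel has dimension at least `1 + (ε+1-k₁)(η+1-k₂)` somewhere. -/
theorem statement2 [Infinite F] (ε η k₁ k₂ : ℕ)
    (φ : Fin (ε + 1) → Polynomial F) (ψ : Fin (η + 1) → Polynomial F)
    (Lφ : Matrix (Fin ε) (Fin (ε + 1)) (Polynomial F))
    (Lψ : Matrix (Fin η) (Fin (η + 1)) (Polynomial F))
    (hφ : IsDualBasis Lφ fun i => φ i.rev)
    (hψ : IsDualBasis Lψ fun i => ψ i.rev)
    (hφ0 : ∀ x : F, (fun i : Fin (ε + 1) => Polynomial.eval x (φ i.rev)) ≠ 0)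
    (hψ0 : ∀ x : F, (fun i : Fin (η + 1) => Polynomial.eval x (ψ i.rev)) ≠ 0)
    (A : Matrix (Fin k₁) (Fin (ε + 1)) F) (hA : A.rank = k₁)
    (B : Matrix (Fin k₂) (Fin (η + 1)) F) (hB : B.rank = k₂)
    (hAB : (A.map Polynomial.C).mulVec (fun i => φ i.rev) ≠ 0 ∨
           (B.map Polynomial.C).mulVec (fun i => ψ i.rev) ≠ 0) :
    let M : Matrix ((Fin k₁ × Fin η) ⊕ (Fin ε × Fin k₂))
        (Fin (ε + 1) × Fin (η + 1)) (Polynomial F) :=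
      Matrix.of (Sum.elim
        (fun p q => Polynomial.C (A p.1 q.1) * Lψ p.2 q.2)
        (fun p q => Lφ p.1 q.1 * Polynomial.C (B p.2 q.2)))
    ∃ x : F, 1 + (ε + 1 - k₁) * (η + 1 - k₂) ≤
      Module.finrank F (LinearMap.ker ((M.map (Polynomial.eval x)).mulVecLin)) := by
  intro M
  classical
  have hM : M = Matrix.of (Sum.elim
      (fun p q => Polynomial.C (A p.1 q.1) * Lψ p.2 q.2)
      (fun p q => Lφ p.1 q.1 * Polynomial.C (B p.2 q.2))) := rfl
  -- evaluation of the matrix-polynomial products commutes with eval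
  have hevalA : ∀ (x : F) (j : Fin k₁),
      Polynomial.eval x (((A.map Polynomial.C).mulVec (fun i => φ i.rev)) j)
        = A.mulVec (fun i => Polynomial.eval x (φ i.rev)) j := by
    intro x j
    simp [Matrix.mulVec, dotProduct, Polynomial.eval_finset_sum]
  have hevalB : ∀ (x : F) (j : Fin k₂),
      Polynomial.eval x (((B.map Polynomial.C).mulVec (fun i => ψ i.rev)) j)
        = B.mulVec (fun i => Polynomial.eval x (ψ i.rev)) j := by
    intro x j
    simp [Matrix.mulVec, dotProduct, Polynomial.eval_finset_sum]
  -- choose a good evaluation point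
  obtain ⟨x, hx⟩ : ∃ x : F,
      (A.mulVec (fun i => Polynomial.eval x (φ i.rev)) ≠ 0
        ∧ (fun i : Fin (η + 1) => Polynomial.eval x (ψ i.rev)) ≠ 0) ∨
      ((fun i : Fin (ε + 1) => Polynomial.eval x (φ i.rev)) ≠ 0
        ∧ B.mulVec (fun i => Polynomial.eval x (ψ i.rev)) ≠ 0) := by
    rcases hAB with h | h
    · obtain ⟨j, hj⟩ := Function.ne_iff.1 h
      obtain ⟨x, hx⟩ : ∃ x, Polynomial.eval x
          (((A.map Polynomial.C).mulVec (fun i => φ i.rev)) j) ≠ 0 := by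
        by_contra hcon
        push_neg at hcon
        exact hj (Polynomial.zero_of_eval_zero _ hcon)
      refine ⟨x, Or.inl ⟨Function.ne_iff.2 ⟨j, ?_⟩, hψ0 x⟩⟩
      rw [← hevalA x j]
      exact hx
    · obtain ⟨j, hj⟩ := Function.ne_iff.1 h
      obtain ⟨x, hx⟩ : ∃ x, Polynomial.eval x
          (((B.map Polynomial.C).mulVec (fun i => ψ i.rev)) j) ≠ 0 := by
        by_contra hcon
        push_neg at hcon
        exact hj (Polynomial.zero_of_eval_zero _ hcon)
      refine ⟨x, Or.inr ⟨hφ0 x, Function.ne_iff.2 ⟨j, ?_⟩⟩⟩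
      rw [← hevalB x j]
      exact hx
  refine ⟨x, ?_⟩
  set p : Fin (ε + 1) → F := fun i => Polynomial.eval x (φ i.rev) with hp_def
  set q : Fin (η + 1) → F := fun i => Polynomial.eval x (ψ i.rev) with hq_def
  -- the evaluated dual bases annihilate p and q
  have hLp : (Lφ.map (Polynomial.eval x)).mulVec p = 0 := by
    funext r
    have h := congrFun hφ.2.1 r
    simp only [Matrix.mulVec, dotProduct, Pi.zero_apply] at h ⊢
    have := congrArg (Polynomial.eval x) h
    simpa [Polynomial.eval_finset_sum, hp_def] using this
  have hLq : (Lψ.map (Polynomial.eval x)).mulVec q = 0 := by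
    funext r
    have h := congrFun hψ.2.1 r
    simp only [Matrix.mulVec, dotProduct, Pi.zero_apply] at h ⊢
    have := congrArg (Polynomial.eval x) h
    simpa [Polynomial.eval_finset_sum, hq_def] using this
  -- block structure of M evaluated at x applied to Kronecker vectors
  have hblock : ∀ (u : Fin (ε + 1) → F) (v : Fin (η + 1) → F),
      (M.map (Polynomial.eval x)).mulVec (kron u v)
        = Sum.elim
            (fun s : Fin k₁ × Fin η =>
              A.mulVec u s.1 * (Lψ.map (Polynomial.eval x)).mulVec v s.2)
            (fun s : Fin ε × Fin k₂ =>
              (Lφ.map (Polynomial.eval x)).mulVec u s.1 * B.mulVec v s.2) := by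
    intro u v
    funext s
    cases s with
    | inl s =>
      simp only [hM, Matrix.mulVec, dotProduct, Matrix.map_apply, Matrix.of_apply,
        Sum.elim_inl, kron, Fintype.sum_prod_type, Polynomial.eval_mul, Polynomial.eval_C]
      rw [Finset.sum_mul_sum]
      exact Finset.sum_congr rfl fun a _ => Finset.sum_congr rfl fun b _ => by ring
    | inr s =>
      simp only [hM, Matrix.mulVec, dotProduct, Matrix.map_apply, Matrix.of_apply,
        Sum.elim_inr, kron, Fintype.sum_prod_type, Polynomial.eval_mul, Polynomial.eval_C]
      rw [Finset.sum_mul_sum]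
      exact Finset.sum_congr rfl fun a _ => Finset.sum_congr rfl fun b _ => by ring
  set K := LinearMap.ker ((M.map (Polynomial.eval x)).mulVecLin) with hK
  have hmem : ∀ (u : Fin (ε + 1) → F) (v : Fin (η + 1) → F),
      (A.mulVec u = 0 ∨ (Lψ.map (Polynomial.eval x)).mulVec v = 0) →
      ((Lφ.map (Polynomial.eval x)).mulVec u = 0 ∨ B.mulVec v = 0) →
      kron u v ∈ K := by
    intro u v h1 h2
    rw [hK, LinearMap.mem_ker, Matrix.mulVecLin_apply, hblock]
    funext s
    cases s with
    | inl s =>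
      rcases h1 with h | h
      · simp [congrFun h s.1]
      · simp [congrFun h s.2]
    | inr s =>
      rcases h2 with h | h
      · simp [congrFun h s.1]
      · simp [congrFun h s.2]
  -- bases of the kernels of A and B
  obtain ⟨hKA, hk₁⟩ := finrank_ker_mulVecLin A hA
  obtain ⟨hKB, hk₂⟩ := finrank_ker_mulVecLin B hB
  let bu : Module.Basis (Fin (ε + 1 - k₁)) F (LinearMap.ker A.mulVecLin) :=
    Module.finBasisOfFinrankEq F _ hKA
  let bv : Module.Basis (Fin (η + 1 - k₂)) F (LinearMap.ker B.mulVecLin) :=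
    Module.finBasisOfFinrankEq F _ hKB
  set u : Fin (ε + 1 - k₁) → (Fin (ε + 1) → F) := fun i => (bu i : Fin (ε + 1) → F) with hu_def
  set v : Fin (η + 1 - k₂) → (Fin (η + 1) → F) := fun j => (bv j : Fin (η + 1) → F) with hv_def
  have hu : LinearIndependent F u :=
    bu.linearIndependent.map' (LinearMap.ker A.mulVecLin).subtype (Submodule.ker_subtype _)
  have hv : LinearIndependent F v :=
    bv.linearIndependent.map' (LinearMap.ker B.mulVecLin).subtype (Submodule.ker_subtype _)
  have hAu : ∀ i, A.mulVec (u i) = 0 := by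
    intro i
    have := (bu i).2
    rwa [LinearMap.mem_ker, Matrix.mulVecLin_apply] at this
  have hBv : ∀ j, B.mulVec (v j) = 0 := by
    intro j
    have := (bv j).2
    rwa [LinearMap.mem_ker, Matrix.mulVecLin_apply] at this
  -- the family: kron p q together with the kron (u i) (v j)
  set f : Option (Fin (ε + 1 - k₁) × Fin (η + 1 - k₂)) → (Fin (ε + 1) × Fin (η + 1) → F) :=
    fun o => o.elim (kron p q) (fun ij => kron (u ij.1) (v ij.2)) with hf_def
  have hfmem : ∀ o, f o ∈ K := by
    intro o
    cases o with
    | none => exact hmem p q (Or.inr hLq) (Or.inl hLp)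
    | some ij => exact hmem _ _ (Or.inl (hAu ij.1)) (Or.inr (hBv ij.2))
  have hfind : LinearIndependent F f := by
    rcases hx with ⟨hAp, hq⟩ | ⟨hp, hBq⟩
    · refine indep_aux hu hv (leftMulLin A (Fin (η + 1))) ?_ ?_
      · rw [leftMulLin_kron]
        exact kron_ne_zero hAp hq
      · intro i j
        rw [leftMulLin_kron, hAu i, kron_zero_left]
    · refine indep_aux hu hv (rightMulLin B (Fin (ε + 1))) ?_ ?_
      · rw [rightMulLin_kron]
        exact kron_ne_zero hp hBq
      · intro i j
        rw [rightMulLin_kron, hBv j, kron_zero_right]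
  -- lift to the kernel and count
  set g : Option (Fin (ε + 1 - k₁) × Fin (η + 1 - k₂)) → K := fun o => ⟨f o, hfmem o⟩ with hg_def
  have hgind : LinearIndependent F g := by
    apply LinearIndependent.of_comp K.subtype
    exact hfind
  have hcard := hgind.fintype_card_le_finrank
  simp only [Fintype.card_option, Fintype.card_prod, Fintype.card_fin] at hcard
  omega

end PaperLin
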